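/- Let N ≥ 1, 1 ≤ p, q < ∞ and θ > 0 with θ ≤ q. Let F : ℝ → ℝ be a continuous function such that F(0) = 0, F is differentiable at 0, and there exists α ≠ 0 with F(t)|t|^{−θ} → α as |t| → ∞. If f belongs to the Orlicz space L^q_p(ℝ^N), then F ∘ f belongs to the Orlicz space L^{q/θ}_p(ℝ^N). -/

import Mathlib

open MeasureTheory Set Filter

/-- Composition property of Orlicz spaces: if `F` is continuous, `F(0) = 0`, `F` is
differentiable at `0` and `F(t)|t|^{-θ} → α ≠ 0` as `|t| → ∞`, then `f ∈ L^q_p(ℝ^N)`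
implies `F ∘ f ∈ L^{q/θ}_p(ℝ^N)`. -/
theorem orlicz_comp (N : ℕ) (hN : 1 ≤ N) (p q θ : ℝ) (hp : 1 ≤ p) (hq : 1 ≤ q)
    (hθ : 0 < θ) (hθq : θ ≤ q) (δ : ℝ) (hδ : 0 < δ)
    (F : ℝ → ℝ) (hFc : Continuous F) (hF0 : F 0 = 0) (hFd : DifferentiableAt ℝ F 0)
    (α : ℝ) (hα : α ≠ 0)
    (hlim : Tendsto (fun t => F t * |t| ^ (-θ)) (cocompact ℝ) (nhds α))
    (f : (Fin N → ℝ) → ℝ) (hf : Measurable f)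
    (h₁ : MemLp ({x | |f x| ≤ δ}.indicator f) (ENNReal.ofReal p) volume)
    (h₂ : MemLp ({x | δ ≤ |f x|}.indicator f) (ENNReal.ofReal q) volume) :
    MemLp ({x | |F (f x)| ≤ δ}.indicator (fun x => F (f x))) (ENNReal.ofReal p) volume ∧
    MemLp ({x | δ ≤ |F (f x)|}.indicator (fun x => F (f x))) (ENNReal.ofReal (q / θ)) volume := by
  set h : (Fin N → ℝ) → ℝ := {x | |f x| ≤ δ}.indicator f with hh
  set k : (Fin N → ℝ) → ℝ := {x | δ ≤ |f x|}.indicator f with hk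
  have hp0 : (ENNReal.ofReal p) ≠ 0 := (ENNReal.ofReal_pos.mpr (by linarith)).ne'
  have hq0 : (ENNReal.ofReal q) ≠ 0 := (ENNReal.ofReal_pos.mpr (by linarith)).ne'
  -- finite measure of super-level sets of |f|
  have fin : ∀ c : ℝ, 0 < c → volume {x | c ≤ |f x|} < (⊤ : ENNReal) := by
    intro c hc
    have hsub : {x | c ≤ |f x|} ⊆
        {x | (min c δ).toNNReal ≤ ‖h x‖₊} ∪ {x | δ.toNNReal ≤ ‖k x‖₊} := by
      intro x hx
      simp only [Set.mem_setOf_eq] at hx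
      by_cases hxδ : |f x| ≤ δ
      · left
        have hhx : h x = f x := Set.indicator_of_mem (show x ∈ {x | |f x| ≤ δ} from hxδ) f
        simp only [Set.mem_setOf_eq, hhx, Real.toNNReal_le_iff_le_coe, coe_nnnorm,
          Real.norm_eq_abs]
        exact le_trans (min_le_left _ _) hx
      · right
        push_neg at hxδ
        have hkx : k x = f x := Set.indicator_of_mem (show x ∈ {x | δ ≤ |f x|} from hxδ.le) f
        simp only [Set.mem_setOf_eq, hkx, Real.toNNReal_le_iff_le_coe, coe_nnnorm,
          Real.norm_eq_abs]
        exact hxδ.le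
    refine lt_of_le_of_lt ((measure_mono hsub).trans (measure_union_le _ _)) ?_
    refine ENNReal.add_lt_top.mpr ⟨?_, ?_⟩
    · exact h₁.meas_ge_lt_top hp0 ENNReal.ofReal_ne_top
        (Real.toNNReal_pos.mpr (lt_min hc hδ)).ne'
    · exact h₂.meas_ge_lt_top hq0 ENNReal.ofReal_ne_top (Real.toNNReal_pos.mpr hδ).ne'
  -- linear bound near zero
  obtain ⟨C, hC0, ε, hε0, hεb⟩ :
      ∃ C : ℝ, 0 < C ∧ ∃ ε > 0, ∀ t : ℝ, |t| < ε → |F t| ≤ C * |t| := by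
    have h1 : (fun t => F t) =O[nhds (0:ℝ)] fun t => t := by
      simpa [hF0] using hFd.isBigO_sub
    obtain ⟨C, hC0, hC⟩ := h1.exists_pos
    obtain ⟨ε, hε0, hεb⟩ := Metric.eventually_nhds_iff.mp hC.bound
    refine ⟨C, hC0, ε, hε0, fun t ht => ?_⟩
    have h5 := hεb (show dist t 0 < ε by simpa [Real.dist_eq] using ht)
    simpa [Real.norm_eq_abs] using h5
  -- continuity bound near zero
  obtain ⟨ρ, hρ0, hρ⟩ : ∃ ρ > 0, ∀ t : ℝ, |t| < ρ → |F t| < δ := by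
    obtain ⟨ρ, hρ0, hρ⟩ := Metric.continuousAt_iff.mp (hFc.continuousAt (x := 0)) δ hδ
    refine ⟨ρ, hρ0, fun t ht => ?_⟩
    have h5 := hρ (show dist t 0 < ρ by simpa [Real.dist_eq] using ht)
    simpa [Real.dist_eq, hF0] using h5
  -- growth bound at infinity
  obtain ⟨M₀, hM₀1, hM₀⟩ :
      ∃ M₀ : ℝ, 1 ≤ M₀ ∧ ∀ t : ℝ, M₀ ≤ |t| → |F t| ≤ 2 * |α| * |t| ^ θ := by
    have hev : ∀ᶠ t in cocompact ℝ, dist (F t * |t| ^ (-θ)) α < |α| :=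
      Metric.tendsto_nhds.mp hlim |α| (abs_pos.mpr hα)
    rw [cocompact_eq_atBot_atTop, eventually_sup] at hev
    obtain ⟨hbot, htop⟩ := hev
    obtain ⟨a, ha⟩ := eventually_atBot.mp hbot
    obtain ⟨b, hb⟩ := eventually_atTop.mp htop
    refine ⟨max 1 (max (|a| + 1) (|b| + 1)), le_max_left _ _, fun t ht => ?_⟩
    have ht1 : 1 ≤ |t| := le_trans (le_max_left _ _) ht
    have hdist : dist (F t * |t| ^ (-θ)) α < |α| := by
      rcases le_or_gt 0 t with h0 | h0
      · refine hb t ?_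
        have h2 : |b| + 1 ≤ |t| := le_trans (le_trans (le_max_right _ _) (le_max_right _ _)) ht
        rw [abs_of_nonneg h0] at h2
        have := le_abs_self b
        linarith
      · refine ha t ?_
        have h2 : |a| + 1 ≤ |t| := le_trans (le_trans (le_max_left _ _) (le_max_right _ _)) ht
        rw [abs_of_neg h0] at h2
        have := neg_abs_le a
        linarith
    have habs : |F t| * |t| ^ (-θ) < 2 * |α| := by
      have h1 : |F t * |t| ^ (-θ)| < 2 * |α| := by
        have h2 := abs_sub_abs_le_abs_sub (F t * |t| ^ (-θ)) α
        rw [Real.dist_eq] at hdist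
        linarith
      rwa [abs_mul, abs_of_nonneg (Real.rpow_nonneg (abs_nonneg t) _)] at h1
    have hpos : (0:ℝ) < |t| ^ θ := Real.rpow_pos_of_pos (by linarith) _
    have key : |F t| = (|F t| * |t| ^ (-θ)) * |t| ^ θ := by
      rw [mul_assoc, Real.rpow_neg (abs_nonneg t), inv_mul_cancel₀ hpos.ne', mul_one]
    rw [key]
    exact mul_le_mul_of_nonneg_right habs.le hpos.le
  -- bound on a compact interval
  set M : ℝ := max M₀ δ with hM
  have hMpos : 0 < M := lt_of_lt_of_le hδ (le_max_right _ _)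
  obtain ⟨B, hB⟩ :=
    (isCompact_Icc (a := -M) (b := M)).exists_bound_of_continuousOn hFc.continuousOn
  have hB0 : 0 ≤ B :=
    le_trans (norm_nonneg _) (hB 0 (Set.mem_Icc.mpr ⟨by linarith, by linarith⟩))
  have hBb : ∀ t : ℝ, |t| ≤ M → |F t| ≤ B := by
    intro t ht
    have h2 := abs_le.mp ht
    simpa [Real.norm_eq_abs] using hB t (Set.mem_Icc.mpr ⟨h2.1, h2.2⟩)
  have hg : Measurable fun x => F (f x) := hFc.measurable.comp hf
  constructor
  · -- part (a) : small part in L^p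
    set η : ℝ := min (ε / 2) δ with hη
    have hη0 : 0 < η := lt_min (by linarith) hδ
    set T : Set (Fin N → ℝ) := {x | η ≤ |f x|} with hT
    have hTm : MeasurableSet T := measurableSet_le measurable_const hf.abs
    have hD : MemLp (fun x => C * |h x| + T.indicator (fun _ => δ) x)
        (ENNReal.ofReal p) volume := by
      have h3 := h₁.norm.const_mul C
      simp only [Real.norm_eq_abs] at h3
      exact h3.add (memLp_indicator_const _ hTm δ (Or.inr (fin η hη0).ne))
    refine MemLp.of_le hD ((hg.indicator
      (measurableSet_le hg.abs measurable_const)).aestronglyMeasurable) ?_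
    refine Filter.Eventually.of_forall fun x => ?_
    simp only [Real.norm_eq_abs]
    by_cases hx : x ∈ {x | |F (f x)| ≤ δ}
    · rw [Set.indicator_of_mem hx]
      have hxd : |F (f x)| ≤ δ := hx
      have hterm : |F (f x)| ≤ C * |h x| + T.indicator (fun _ => δ) x := by
        by_cases hxη : |f x| ≤ η
        · have hfx : x ∈ {x | |f x| ≤ δ} := le_trans hxη (min_le_right _ _)
          have hhx : h x = f x := Set.indicator_of_mem hfx f
          have h1 : |F (f x)| ≤ C * |f x| :=
            hεb _ (lt_of_le_of_lt (le_trans hxη (min_le_left _ _)) (by linarith))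
          have h2 : (0:ℝ) ≤ T.indicator (fun _ => δ) x :=
            Set.indicator_nonneg (fun _ _ => hδ.le) x
          rw [hhx]
          linarith
        · push_neg at hxη
          have hxT : x ∈ T := hxη.le
          rw [Set.indicator_of_mem hxT]
          have h1 : (0:ℝ) ≤ C * |h x| := by positivity
          linarith
      exact le_trans hterm (le_abs_self _)
    · rw [Set.indicator_of_notMem hx]
      simpa using abs_nonneg _
  · -- part (b) : large part in L^{q/θ}
    set T' : Set (Fin N → ℝ) := {x | ρ ≤ |f x|} with hT'
    have hT'm : MeasurableSet T' := measurableSet_le measurable_const hf.abs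
    have hkq : MemLp (fun x => (2 * |α|) * ‖k x‖ ^ θ) (ENNReal.ofReal (q / θ)) volume := by
      have h3 := (h₂.norm_rpow_div (ENNReal.ofReal θ)).const_mul (2 * |α|)
      rwa [ENNReal.toReal_ofReal hθ.le, ← ENNReal.ofReal_div_of_pos hθ] at h3
    have hD : MemLp (fun x => T'.indicator (fun _ => B) x + (2 * |α|) * ‖k x‖ ^ θ)
        (ENNReal.ofReal (q / θ)) volume :=
      (memLp_indicator_const _ hT'm B (Or.inr (fin ρ hρ0).ne)).add hkq
    refine MemLp.of_le hD ((hg.indicator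
      (measurableSet_le measurable_const hg.abs)).aestronglyMeasurable) ?_
    refine Filter.Eventually.of_forall fun x => ?_
    simp only [Real.norm_eq_abs]
    by_cases hx : x ∈ {x | δ ≤ |F (f x)|}
    · rw [Set.indicator_of_mem hx]
      have hxd : δ ≤ |F (f x)| := hx
      have hρx : x ∈ T' := by
        by_contra hcon
        have h2 : |f x| < ρ := by
          simpa [hT', Set.mem_setOf_eq, not_le] using hcon
        exact absurd hxd (not_le.mpr (hρ _ h2))
      have hterm : |F (f x)| ≤ T'.indicator (fun _ => B) x + (2 * |α|) * |k x| ^ θ := by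
        by_cases hxM : |f x| ≤ M
        · have h1 : |F (f x)| ≤ B := hBb _ hxM
          rw [Set.indicator_of_mem hρx]
          have h3 : (0:ℝ) ≤ (2 * |α|) * |k x| ^ θ := by positivity
          linarith
        · push_neg at hxM
          have hMδ : x ∈ {x | δ ≤ |f x|} :=
            le_trans (le_trans (le_max_right M₀ δ) hxM.le) le_rfl
          have hkx : k x = f x := Set.indicator_of_mem hMδ f
          have h1 : |F (f x)| ≤ 2 * |α| * |f x| ^ θ :=
            hM₀ _ (le_trans (le_max_left M₀ δ) hxM.le)
          have h2 : (0:ℝ) ≤ T'.indicator (fun _ => B) x :=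
            Set.indicator_nonneg (fun _ _ => hB0) x
          rw [hkx]
          linarith
      refine le_trans ?_ (le_abs_self _)
      simpa [Real.norm_eq_abs] using hterm
    · rw [Set.indicator_of_notMem hx]
      simpa using abs_nonneg _
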